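/- Let v ∈ ℝⁿ and suppose λ̂ ∈ ℝ satisfies ∑ᵢ aᵢ · clamp(vᵢ − λ̂aᵢ; lᵢ, uᵢ) = d. Define p ∈ ℝⁿ by pᵢ := clamp(vᵢ − λ̂aᵢ; lᵢ, uᵢ). Then p ∈ K∩L and p is the Euclidean projection of v onto K∩L: ‖v − p‖ ≤ ‖v − q‖ for every q ∈ K∩L, with strict inequality whenever q ≠ p. -/

import Mathlib

open RealInnerProductSpace

/-- `clamp(t; l, u) = max(l, min(u, t))`. -/
def clamp (l u t : ℝ) : ℝ := max l (min u t)

variable {n : ℕ}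

/-- The box `K = {x | l ≤ x ≤ u}`. -/
def boxK (l u : EuclideanSpace ℝ (Fin n)) : Set (EuclideanSpace ℝ (Fin n)) :=
  {x | ∀ i, l i ≤ x i ∧ x i ≤ u i}

/-- The hyperplane `L = {x | ⟪a,x⟫ = d}`. -/
def hypL (a : EuclideanSpace ℝ (Fin n)) (d : ℝ) : Set (EuclideanSpace ℝ (Fin n)) :=
  {x | ⟪a, x⟫ = d}

/-- The candidate projection `p = Π_K(v − λ̂ a)`, i.e. `pᵢ = clamp(vᵢ − λ̂aᵢ; lᵢ, uᵢ)`. -/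
def projClamp (l u a v : EuclideanSpace ℝ (Fin n)) (lamhat : ℝ) :
    EuclideanSpace ℝ (Fin n) :=
  WithLp.toLp 2 (fun i => clamp (l i) (u i) (v i - lamhat * a i))

lemma clamp_mem (l u t : ℝ) (h : l ≤ u) : l ≤ clamp l u t ∧ clamp l u t ≤ u := by
  unfold clamp
  constructor
  · exact le_max_left _ _
  · exact max_le h (min_le_left _ _)

lemma clamp_key (l u t q : ℝ) (h1 : l ≤ q) (h2 : q ≤ u) :
    0 ≤ (t - clamp l u t) * (clamp l u t - q) := by
  unfold clamp
  rcases le_total u t with h | h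
  · rw [min_eq_left h, max_eq_right (h1.trans h2)]
    nlinarith
  · rw [min_eq_right h]
    rcases le_total l t with h' | h'
    · rw [max_eq_right h']; nlinarith
    · rw [max_eq_left h']; nlinarith

/-- If `λ̂` solves `∑ᵢ aᵢ clamp(vᵢ − λ̂aᵢ; lᵢ, uᵢ) = d`, then
`p = clamp(v − λ̂ a; l, u)` is the Euclidean projection of `v` onto `K ∩ L`. -/
theorem clamp_is_projection (hn : 1 ≤ n)
    (l u a : EuclideanSpace ℝ (Fin n)) (hlu : ∀ i, l i < u i) (d : ℝ)
    (v : EuclideanSpace ℝ (Fin n)) (lamhat : ℝ)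
    (hlam : ∑ i, a i * clamp (l i) (u i) (v i - lamhat * a i) = d) :
    projClamp l u a v lamhat ∈ boxK l u ∩ hypL a d ∧
    ∀ q ∈ boxK l u ∩ hypL a d,
      ‖v - projClamp l u a v lamhat‖ ≤ ‖v - q‖ ∧
      (q ≠ projClamp l u a v lamhat → ‖v - projClamp l u a v lamhat‖ < ‖v - q‖) := by
  set p := projClamp l u a v lamhat with hp
  have hpi : ∀ i, p i = clamp (l i) (u i) (v i - lamhat * a i) := fun i => rfl
  have hinner : ∀ x y : EuclideanSpace ℝ (Fin n), ⟪x, y⟫ = ∑ i, x i * y i := by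
    intro x y
    simp [PiLp.inner_apply, RCLike.inner_apply, mul_comm]
  have hpK : p ∈ boxK l u := by
    intro i
    exact clamp_mem (l i) (u i) (v i - lamhat * a i) (hlu i).le
  have hpL : p ∈ hypL a d := by
    show ⟪a, p⟫ = d
    rw [hinner]
    exact hlam
  refine ⟨⟨hpK, hpL⟩, ?_⟩
  rintro q ⟨hqK, hqL⟩
  have hqL' : ∑ i, a i * q i = d := by rw [← hinner]; exact hqL
  -- key inequality: ⟪v - p, p - q⟫ ≥ 0
  have key : 0 ≤ ⟪v - p, p - q⟫ := by
    rw [hinner]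
    have e : ∀ i, (v - p) i * (p - q) i =
        ((v i - lamhat * a i) - p i) * (p i - q i)
          + lamhat * (a i * p i - a i * q i) := by
      intro i
      simp only [PiLp.sub_apply]
      ring
    rw [Finset.sum_congr rfl (fun i _ => e i), Finset.sum_add_distrib,
        ← Finset.mul_sum, Finset.sum_sub_distrib]
    have h1 : 0 ≤ ∑ i, ((v i - lamhat * a i) - p i) * (p i - q i) := by
      apply Finset.sum_nonneg
      intro i _
      rw [hpi]
      exact clamp_key _ _ _ _ (hqK i).1 (hqK i).2
    have h2 : (∑ i, a i * p i) - ∑ i, a i * q i = 0 := by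
      rw [hqL']
      have : ∑ i, a i * p i = d := hlam
      rw [this]; ring
    rw [h2, mul_zero, add_zero]
    exact h1
  have hsq : ‖v - q‖ ^ 2 = ‖v - p‖ ^ 2 + 2 * ⟪v - p, p - q⟫ + ‖p - q‖ ^ 2 := by
    have h := norm_add_sq_real (v - p) (p - q)
    rw [show (v - p) + (p - q) = v - q by abel] at h
    exact h
  have hle2 : ‖v - p‖ ^ 2 + ‖p - q‖ ^ 2 ≤ ‖v - q‖ ^ 2 := by nlinarith
  constructor
  · nlinarith [norm_nonneg (v - p), norm_nonneg (v - q), norm_nonneg (p - q)]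
  · intro hne
    have hpq : 0 < ‖p - q‖ := by
      rw [norm_pos_iff, sub_ne_zero]
      exact fun h => hne h.symm
    nlinarith [norm_nonneg (v - p), norm_nonneg (v - q)]
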